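/- Descent lemma for conjugate products (well-definedness of f_φ over Laurent series, from the Remark-Notation on descending Puiseux factorizations): let p be a positive integer, φ ∈ S_p, ζ ∈ ℂ a primitive p-th root of unity, and for 0 ≤ j ≤ p−1 let φ_j := ζ^j ⋆_p φ ∈ S_p (so φ_j.coeff(m/p) = ζ^{j·m} · φ.coeff(m/p) for all integers m). Then every coefficient of the polynomial ∏_{j=0}^{p−1} (Y − C φ_j) ∈ (HahnSeries ℚ ℂ)[Y] has support contained in ℤ, i.e. lies in the image of ι. -/

import Mathlib

noncomputable section

open HahnSeries

section Aux

/-- Preimage of a PWO set under a strictly monotone map is PWO. -/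
lemma isPWO_preimage_of_strictMono {α β : Type*} [LinearOrder α] [LinearOrder β]
    {g : α → β} (hg : StrictMono g) {S : Set β} (hS : S.IsPWO) : (g ⁻¹' S).IsPWO := by
  intro f
  obtain ⟨m, n, hmn, hle⟩ := hS (fun k => ⟨g (f k).1, (f k).2⟩)
  exact ⟨m, n, hmn, (hg.le_iff_le (a := (f m).1) (b := (f n).1)).mp hle⟩

/-- Coefficientwise scaling of a Hahn series over `ℤ` by powers of `ζ`. -/
def zscale (ζ : ℂ) (x : HahnSeries ℤ ℂ) : HahnSeries ℤ ℂ where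
  coeff n := ζ ^ n * x.coeff n
  isPWO_support' := x.isPWO_support.mono (fun n hn => by
    simp only [Function.mem_support, ne_eq] at hn ⊢
    exact fun h => hn (by rw [h, mul_zero]))

@[simp] lemma zscale_coeff (ζ : ℂ) (x : HahnSeries ℤ ℂ) (n : ℤ) :
    (zscale ζ x).coeff n = ζ ^ n * x.coeff n := rfl

lemma zscale_support_subset (ζ : ℂ) (x : HahnSeries ℤ ℂ) :
    (zscale ζ x).support ⊆ x.support := by
  intro n hn
  simp only [HahnSeries.mem_support, zscale_coeff, ne_eq] at hn ⊢
  exact fun h => hn (by rw [h, mul_zero])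

lemma zscale_mul (ζ : ℂ) (hζ0 : ζ ≠ 0) (x y : HahnSeries ℤ ℂ) :
    zscale ζ (x * y) = zscale ζ x * zscale ζ y := by
  ext n
  rw [zscale_coeff, HahnSeries.coeff_mul, HahnSeries.coeff_mul]
  have hsub : Finset.antidiagonal (zscale ζ x).isPWO_support
      (zscale ζ y).isPWO_support n ⊆
      Finset.antidiagonal x.isPWO_support y.isPWO_support n :=
    (Finset.antidiagonal_mono_left (zscale_support_subset ζ x)).trans
      (Finset.antidiagonal_mono_right (zscale_support_subset ζ y))
  have hvan : ∀ ij ∈ Finset.antidiagonal x.isPWO_support y.isPWO_support n,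
      ij ∉ Finset.antidiagonal (zscale ζ x).isPWO_support
        (zscale ζ y).isPWO_support n →
      (zscale ζ x).coeff ij.1 * (zscale ζ y).coeff ij.2 = 0 := by
    intro ij hmem hnmem
    rw [Finset.mem_antidiagonal] at hmem hnmem
    push_neg at hnmem
    by_cases h1 : ij.1 ∈ (zscale ζ x).support
    · by_cases h2 : ij.2 ∈ (zscale ζ y).support
      · exact absurd hmem.2.2 (hnmem h1 h2)
      · simp only [HahnSeries.mem_support, not_not] at h2
        rw [h2, mul_zero]
    · simp only [HahnSeries.mem_support, not_not] at h1
      rw [h1, zero_mul]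
  rw [Finset.sum_subset hsub hvan, Finset.mul_sum]
  apply Finset.sum_congr rfl
  intro ij hij
  obtain ⟨-, -, hsum⟩ := (Finset.mem_antidiagonal).mp hij
  rw [zscale_coeff, zscale_coeff, ← hsum, zpow_add₀ hζ0]
  ring

/-- `zscale` as a ring homomorphism. -/
def zscaleHom (ζ : ℂ) (hζ0 : ζ ≠ 0) : HahnSeries ℤ ℂ →+* HahnSeries ℤ ℂ where
  toFun := zscale ζ
  map_one' := by
    ext n
    rw [zscale_coeff]
    by_cases h : n = 0 <;> simp [h]
  map_mul' := zscale_mul ζ hζ0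
  map_zero' := by ext n; simp
  map_add' x y := by ext n; simp [mul_add]

end Aux

/-- Descent lemma for conjugate products (well-definedness of `f_φ` over Laurent series):
let `p` be a positive integer, `φ` a Puiseux series with support in `(1/p)ℤ`, `ζ ∈ ℂ` a
primitive `p`-th root of unity, and `Φ j = ζ^j ⋆_p φ` (for `0 ≤ j ≤ p-1`) the conjugates
of `φ`, so that `(Φ j).coeff(m/p) = ζ^(j·m) · φ.coeff(m/p)` for all integers `m`. Then
every coefficient of the polynomial `∏ⱼ (Y − Φ j)` has support contained in `ℤ`, i.e. is
a Laurent series. -/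
theorem conjugate_product_has_integer_support (p : ℕ) (hp : 0 < p)
    (φ : HahnSeries ℚ ℂ)
    (hφ : ∀ q ∈ φ.support, ∃ m : ℤ, q = (m : ℚ) / p)
    (ζ : ℂ) (hζ : IsPrimitiveRoot ζ p)
    (Φ : Fin p → HahnSeries ℚ ℂ)
    (hΦsupp : ∀ j : Fin p, ∀ q ∈ (Φ j).support, ∃ m : ℤ, q = (m : ℚ) / p)
    (hΦ : ∀ (j : Fin p) (m : ℤ),
      (Φ j).coeff ((m : ℚ) / p) = ζ ^ ((j.1 : ℤ) * m) * φ.coeff ((m : ℚ) / p)) :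
    ∀ i : ℕ,
      ∀ q ∈ ((∏ j : Fin p, (Polynomial.X - Polynomial.C (Φ j))).coeff i).support,
        ∃ m : ℤ, q = (m : ℚ) := by
  haveI : NeZero p := ⟨hp.ne'⟩
  have hζ0 : ζ ≠ 0 := hζ.ne_zero hp.ne'
  have hp0 : (0 : ℚ) < (p : ℚ) := by exact_mod_cast hp
  -- congruent exponents give equal powers of ζ
  have zeta_congr : ∀ a b : ℤ, a % (p : ℤ) = b % (p : ℤ) → ζ ^ a = ζ ^ b := by
    intro a b hab
    have hdvd : (p : ℤ) ∣ b - a := Int.ModEq.dvd hab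
    obtain ⟨k, hk⟩ := hdvd
    have hb : b = a + (p : ℤ) * k := by linarith
    rw [hb, zpow_add₀ hζ0, zpow_mul, hζ.zpow_eq_one, one_zpow, mul_one]
  -- the additive embedding ℤ →+ ℚ, n ↦ n / p
  set f : ℤ →+ ℚ := AddMonoidHom.mk' (fun n => (n : ℚ) / p)
    (fun a b => by push_cast; ring) with hf_def
  have hf_apply : ∀ n : ℤ, f n = (n : ℚ) / p := fun n => rfl
  have hford : ∀ g g' : ℤ, f g ≤ f g' ↔ g ≤ g' := by
    intro g g'
    rw [hf_apply, hf_apply, div_le_div_iff_of_pos_right hp0]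
    exact_mod_cast Iff.rfl
  have hfmono : StrictMono f := strictMono_of_le_iff_le (fun a b => (hford a b).symm)
  have hfi : Function.Injective f := hfmono.injective
  set emb : HahnSeries ℤ ℂ →+* HahnSeries ℚ ℂ := HahnSeries.embDomainRingHom f hfi hford
    with hemb_def
  set fe : ℤ ↪o ℚ := ⟨⟨f, hfi⟩, hford _ _⟩ with hfe_def
  have hemb_apply : ∀ x : HahnSeries ℤ ℂ, emb x = HahnSeries.embDomain fe x := fun x => rfl
  -- pull back the Φ j to Hahn series over ℤ
  set ψ : Fin p → HahnSeries ℤ ℂ := fun j =>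
    ⟨fun n => (Φ j).coeff ((n : ℚ) / p),
      by
        apply Set.IsPWO.mono (isPWO_preimage_of_strictMono hfmono (Φ j).isPWO_support)
        intro n hn
        exact hn⟩ with hψ_def
  have hψcoeff : ∀ (j : Fin p) (n : ℤ), (ψ j).coeff n = (Φ j).coeff ((n : ℚ) / p) :=
    fun j n => rfl
  have hembψ : ∀ j : Fin p, emb (ψ j) = Φ j := by
    intro j
    rw [hemb_apply]
    ext q
    by_cases hq : q ∈ Set.range fe
    · obtain ⟨n, rfl⟩ := hq
      rw [HahnSeries.embDomain_coeff, hψcoeff]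
      rfl
    · rw [HahnSeries.embDomain_notin_range hq]
      by_contra h
      apply hq
      obtain ⟨m, hm⟩ := hΦsupp j q (by simpa [HahnSeries.mem_support] using Ne.symm h)
      exact ⟨m, hm.symm⟩
  -- the cyclic shift property
  set τ : HahnSeries ℤ ℂ →+* HahnSeries ℤ ℂ := zscaleHom ζ hζ0 with hτ_def
  have hτψ : ∀ j : Fin p, τ (ψ j) = ψ (j + 1) := by
    intro j
    ext n
    show (zscale ζ (ψ j)).coeff n = (ψ (j + 1)).coeff n
    rw [zscale_coeff, hψcoeff, hψcoeff, hΦ j n, hΦ (j + 1) n, ← mul_assoc,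
      ← zpow_add₀ hζ0]
    congr 1
    apply zeta_congr
    have hval : ((j + 1 : Fin p).1) = (j.1 + 1) % p := by
      rw [Fin.val_add, Fin.val_one']
      exact Nat.ModEq.add_left j.1 (Nat.mod_mod_of_dvd 1 dvd_rfl)
    rw [hval]
    have hcast : (((j.1 + 1) % p : ℕ) : ℤ) = ((j.1 : ℤ) + 1) % (p : ℤ) := by push_cast; ring_nf
    rw [hcast]
    have h1 : n + (j.1 : ℤ) * n = ((j.1 : ℤ) + 1) * n := by ring
    rw [h1]
    exact (Int.ModEq.mul_right n (Int.emod_emod_of_dvd _ dvd_rfl)).symm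
  -- the small product polynomial
  set P : Polynomial (HahnSeries ℤ ℂ) := ∏ j : Fin p, (Polynomial.X - Polynomial.C (ψ j))
    with hP_def
  have hPmap : Polynomial.map τ P = P := by
    rw [hP_def, Polynomial.map_prod]
    have step : ∀ j : Fin p, Polynomial.map τ (Polynomial.X - Polynomial.C (ψ j)) =
        Polynomial.X - Polynomial.C (ψ (j + 1)) := by
      intro j
      rw [Polynomial.map_sub, Polynomial.map_X, Polynomial.map_C, hτψ]
    rw [Finset.prod_congr rfl (fun j _ => step j)]
    exact Fintype.prod_equiv (Equiv.addRight (1 : Fin p)) _ _ (fun j => rfl)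
  -- coefficients of P vanish away from multiples of p
  have hPcoeff : ∀ (i : ℕ) (n : ℤ), (P.coeff i).coeff n ≠ 0 → (p : ℤ) ∣ n := by
    intro i n hn
    have h1 : (Polynomial.map τ P).coeff i = P.coeff i := by rw [hPmap]
    rw [Polynomial.coeff_map] at h1
    have h2 : (τ (P.coeff i)).coeff n = (P.coeff i).coeff n := by rw [h1]
    have h3 : ζ ^ n * (P.coeff i).coeff n = (P.coeff i).coeff n := h2
    have h4 : ζ ^ n = 1 := by
      by_contra h
      apply hn
      have := mul_right_cancel₀ hn (h3.trans (one_mul _).symm)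
      exact absurd this h
    exact (hζ.zpow_eq_one_iff_dvd n).mp h4
  -- relate the big product to P
  have hbig : (∏ j : Fin p, (Polynomial.X - Polynomial.C (Φ j))) = Polynomial.map emb P := by
    rw [hP_def, Polynomial.map_prod]
    apply Finset.prod_congr rfl
    intro j _
    rw [Polynomial.map_sub, Polynomial.map_X, Polynomial.map_C, hembψ]
  -- conclude
  intro i q hq
  rw [hbig, Polynomial.coeff_map, hemb_apply] at hq
  have hq' := HahnSeries.support_embDomain_subset hq
  obtain ⟨n, hn, rfl⟩ := hq'
  obtain ⟨m, hm⟩ := hPcoeff i n (by simpa [HahnSeries.mem_support] using hn)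
  refine ⟨m, ?_⟩
  show f n = (m : ℚ)
  rw [hf_apply, hm]
  push_cast
  field_simp
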